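/- arXiv:2111.02556 — 4 statements merged into one kernel-verified Lean document; each statement's English description precedes it below -/
import Mathlib

section
/- Let K_ω > 0, δ, ξ, a ∈ ℝ, let Φ₁, Φ₂ : ℝ × ℝ → ℝ be continuous at the point (x, 0), and let ȳ ∈ ℝ satisfy ȳ + Φ₂(x, 0) > 0. Set λ_{(a,n)} := exp(−(2πn + a)/K_ω). Then, as n → ∞, the images in the additive circle ℝ/2πℤ of the real numbers x + ξ + λ_{(a,n)}·Φ₁(x, λ_{(a,n)}·ȳ) + (2πn + a) − K_ω·log(ȳ + Φ₂(x, λ_{(a,n)}·ȳ)) converge in ℝ/2πℤ to the image of h_a(x, ȳ) := x + ξ + a − K_ω·log(ȳ + Φ₂(x, 0)). (Equivalently, the first component of the rescaled first return map F_{λ_{(a,n)}}(x, λ_{(a,n)}·ȳ), which equals this expression mod 2π, converges to h_a(x, ȳ) mod 2π.) -/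
open Real

theorem stmt_4 (K δ ξ a : ℝ) (hK : 0 < K) (Φ₁ Φ₂ : ℝ × ℝ → ℝ) (x ybar : ℝ)
    (hΦ₁ : ContinuousAt Φ₁ (x, 0)) (hΦ₂ : ContinuousAt Φ₂ (x, 0))
    (hpos : 0 < ybar + Φ₂ (x, 0)) :
    Filter.Tendsto
      (fun n : ℕ =>
        ((x + ξ
            + Real.exp (-(2 * π * n + a) / K)
              * Φ₁ (x, Real.exp (-(2 * π * n + a) / K) * ybar)
            + (2 * π * n + a)
            - K * Real.log (ybar + Φ₂ (x, Real.exp (-(2 * π * n + a) / K) * ybar)) : ℝ) :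
          AddCircle (2 * π)))
      Filter.atTop
      (nhds ((x + ξ + a - K * Real.log (ybar + Φ₂ (x, 0)) : ℝ) : AddCircle (2 * π))) := by
  set lam : ℕ → ℝ := fun n => Real.exp (-(2 * π * n + a) / K) with hlam
  have h1 : Filter.Tendsto (fun n : ℕ => -(2 * π * n + a) / K) Filter.atTop Filter.atBot := by
    apply Filter.Tendsto.atBot_div_const hK
    apply Filter.tendsto_neg_atBot_iff.mpr
    apply Filter.tendsto_atTop_add_const_right
    exact Filter.Tendsto.const_mul_atTop (by positivity) tendsto_natCast_atTop_atTop
  have hlamT : Filter.Tendsto lam Filter.atTop (nhds 0) :=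
    Real.tendsto_exp_atBot.comp h1
  have hy : Filter.Tendsto (fun n => lam n * ybar) Filter.atTop (nhds 0) := by
    have := hlamT.mul_const ybar
    rwa [zero_mul] at this
  have hxy : Filter.Tendsto (fun n => ((x, lam n * ybar) : ℝ × ℝ)) Filter.atTop (nhds (x, 0)) :=
    Filter.Tendsto.prodMk_nhds tendsto_const_nhds hy
  have hΦ2n : Filter.Tendsto (fun n => Φ₂ (x, lam n * ybar)) Filter.atTop (nhds (Φ₂ (x, 0))) :=
    hΦ₂.tendsto.comp hxy
  have hΦ1n : Filter.Tendsto (fun n => Φ₁ (x, lam n * ybar)) Filter.atTop (nhds (Φ₁ (x, 0))) :=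
    hΦ₁.tendsto.comp hxy
  have hlog : Filter.Tendsto (fun n => Real.log (ybar + Φ₂ (x, lam n * ybar))) Filter.atTop
      (nhds (Real.log (ybar + Φ₂ (x, 0)))) :=
    ((Real.continuousAt_log (ne_of_gt hpos)).tendsto).comp (tendsto_const_nhds.add hΦ2n)
  have hg : Filter.Tendsto
      (fun n => x + ξ + lam n * Φ₁ (x, lam n * ybar) + a
          - K * Real.log (ybar + Φ₂ (x, lam n * ybar))) Filter.atTop
      (nhds (x + ξ + a - K * Real.log (ybar + Φ₂ (x, 0)))) := by
    have h := (((tendsto_const_nhds (α := ℕ) (x := x + ξ)).add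
        (hlamT.mul hΦ1n)).add (tendsto_const_nhds (x := a))).sub (hlog.const_mul K)
    simpa using h
  have hg' : Filter.Tendsto
      (fun n => ((x + ξ + lam n * Φ₁ (x, lam n * ybar) + a
          - K * Real.log (ybar + Φ₂ (x, lam n * ybar)) : ℝ) : AddCircle (2 * π)))
      Filter.atTop (nhds ((x + ξ + a - K * Real.log (ybar + Φ₂ (x, 0)) : ℝ) : AddCircle (2 * π))) :=
    ((AddCircle.continuous_mk' (2 * π)).tendsto _).comp hg
  refine hg'.congr fun n => ?_
  have key : (x + ξ + lam n * Φ₁ (x, lam n * ybar) + (2 * π * n + a)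
      - K * Real.log (ybar + Φ₂ (x, lam n * ybar)))
      = (x + ξ + lam n * Φ₁ (x, lam n * ybar) + a
          - K * Real.log (ybar + Φ₂ (x, lam n * ybar))) + 2 * π * n := by
    ring
  have h2 : ((2 * π * n : ℝ) : AddCircle (2 * π)) = 0 := by
    have hs : (2 * π * n : ℝ) = n • (2 * π : ℝ) := by
      rw [nsmul_eq_mul]; ring
    rw [hs, AddCircle.coe_nsmul, AddCircle.coe_period, smul_zero]
  rw [key, AddCircle.coe_add, h2, add_zero]
end

section
/- Let K_ω > 0, δ > 1, ξ, a ∈ ℝ, and let Φ₁, Φ₂ : ℝ × ℝ → ℝ be continuous functions that are 2π-periodic in their first variable and such that Φ₂(x,0) > 0 for every x ∈ ℝ. Set λ_{(a,n)} := exp(−(2πn + a)/K_ω). Then: (i) there exists N such that for all n ≥ N and all (x,ȳ) ∈ ℝ × [0,1], ȳ + Φ₂(x, λ_{(a,n)}·ȳ) > 0, so that the rescaled return maps G_n(x,ȳ) := ( [x + ξ + λ_{(a,n)}·Φ₁(x, λ_{(a,n)}ȳ) + a − K_ω·log(ȳ + Φ₂(x, λ_{(a,n)}ȳ))] mod 2π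 , λ_{(a,n)}^{δ−1}·(ȳ + Φ₂(x, λ_{(a,n)}ȳ))^δ ) ∈ (ℝ/2πℤ) × ℝ are defined on all of ℝ × [0,1]; and (ii) G_n converges uniformly on ℝ × [0,1] to the map (x,ȳ) ↦ ( [x + ξ + a − K_ω·log(ȳ + Φ₂(x,0))] mod 2π , 0 ), where (ℝ/2πℤ) × ℝ carries the product of the standard circle metric and the euclidean metric. -/
open Real

private lemma per_reduce (Φ : ℝ × ℝ → ℝ)
    (hper : ∀ x y : ℝ, Φ (x + 2 * π, y) = Φ (x, y)) (x u : ℝ) :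
    Φ (x, u) = Φ (2 * π * Int.fract (x / (2 * π)), u) := by
  have h2π : (2 * π) ≠ 0 := by positivity
  have hf : Function.Periodic (fun t => Φ (t, u)) (2 * π) := fun t => hper t u
  have hx : 2 * π * Int.fract (x / (2 * π)) = x - (⌊x / (2 * π)⌋ : ℤ) * (2 * π) := by
    rw [Int.fract, mul_sub, mul_div_cancel₀ _ h2π]; ring
  rw [hx]
  exact (hf.sub_int_mul_eq _).symm

private lemma fract_mem (x : ℝ) : 2 * π * Int.fract (x / (2 * π)) ∈ Set.Icc 0 (2 * π) := by
  have h1 := Int.fract_nonneg (x / (2 * π))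
  have h2 := (Int.fract_lt_one (x / (2 * π))).le
  have hπ := Real.pi_pos
  constructor <;> nlinarith

private lemma per_uc (Φ : ℝ × ℝ → ℝ) (hc : Continuous Φ)
    (hper : ∀ x y : ℝ, Φ (x + 2 * π, y) = Φ (x, y)) :
    ∀ ε > (0:ℝ), ∃ d > (0:ℝ), ∀ x u : ℝ, |u| ≤ d → |Φ (x, u) - Φ (x, 0)| ≤ ε := by
  intro ε hε
  have hKc : IsCompact ((Set.Icc (0:ℝ) (2 * π)) ×ˢ Set.Icc (-1:ℝ) 1) :=
    isCompact_Icc.prod isCompact_Icc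
  have huc := hKc.uniformContinuousOn_of_continuous hc.continuousOn
  rw [Metric.uniformContinuousOn_iff] at huc
  obtain ⟨d, hd, hucd⟩ := huc ε hε
  refine ⟨min (d / 2) 1, by positivity, fun x u hu => ?_⟩
  set x' := 2 * π * Int.fract (x / (2 * π)) with hx'
  have hx'mem := fract_mem x
  have humem : u ∈ Set.Icc (-1:ℝ) 1 := abs_le.mp (hu.trans (min_le_right _ _))
  have h0mem : (0:ℝ) ∈ Set.Icc (-1:ℝ) 1 := by constructor <;> norm_num
  have hdist : dist ((x', u) : ℝ × ℝ) (x', 0) < d := by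
    rw [Prod.dist_eq]
    simp only [dist_self, Real.dist_eq, sub_zero]
    have : |u| ≤ d / 2 := hu.trans (min_le_left _ _)
    have : max (0:ℝ) |u| < d := by
      rw [max_lt_iff]; constructor <;> linarith [abs_nonneg u]
    simpa using this
  have := hucd (x', u) (Set.mk_mem_prod hx'mem humem) (x', 0) (Set.mk_mem_prod hx'mem h0mem) hdist
  rw [Real.dist_eq] at this
  rw [per_reduce Φ hper x u, per_reduce Φ hper x 0]
  exact this.le

private lemma per_bdd (Φ : ℝ × ℝ → ℝ) (hc : Continuous Φ)
    (hper : ∀ x y : ℝ, Φ (x + 2 * π, y) = Φ (x, y)) :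
    ∃ M : ℝ, ∀ x u : ℝ, |u| ≤ 1 → |Φ (x, u)| ≤ M := by
  have hKc : IsCompact ((Set.Icc (0:ℝ) (2 * π)) ×ˢ Set.Icc (-1:ℝ) 1) :=
    isCompact_Icc.prod isCompact_Icc
  obtain ⟨M, hM⟩ := hKc.exists_bound_of_continuousOn hc.continuousOn
  refine ⟨M, fun x u hu => ?_⟩
  rw [per_reduce Φ hper x u]
  have := hM (2 * π * Int.fract (x / (2 * π)), u)
    (Set.mk_mem_prod (fract_mem x) (abs_le.mp hu))
  simpa [Real.norm_eq_abs] using this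

private lemma log_lip {c u v : ℝ} (hc : 0 < c) (hu : c ≤ u) (hv : c ≤ v) :
    |Real.log u - Real.log v| ≤ |u - v| / c := by
  have key : ∀ u v : ℝ, c ≤ u → c ≤ v → v ≤ u → Real.log u - Real.log v ≤ (u - v) / c := by
    intro u v hu hv hvu
    have hv0 : 0 < v := lt_of_lt_of_le hc hv
    have hu0 : 0 < u := lt_of_lt_of_le hc hu
    have h1 : Real.log u - Real.log v = Real.log (u / v) :=
      (Real.log_div (ne_of_gt hu0) (ne_of_gt hv0)).symm
    have h2 : Real.log (u / v) ≤ u / v - 1 := Real.log_le_sub_one_of_pos (by positivity)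
    have h3 : u / v - 1 = (u - v) / v := by field_simp
    have h4 : (u - v) / v ≤ (u - v) / c :=
      div_le_div_of_nonneg_left (by linarith) hc hv
    linarith [h1, h2, h3.symm ▸ h2]
  rcases le_total v u with h | h
  · have hlog : Real.log v ≤ Real.log u :=
      Real.log_le_log (lt_of_lt_of_le hc hv) h
    rw [abs_of_nonneg (by linarith), abs_of_nonneg (by linarith)]
    exact key u v hu hv h
  · have hlog : Real.log u ≤ Real.log v :=
      Real.log_le_log (lt_of_lt_of_le hc hu) h
    rw [abs_sub_comm, abs_sub_comm u v, abs_of_nonneg (by linarith),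
      abs_of_nonneg (by linarith)]
    exact key v u hv hu h

private lemma addCircle_dist_le (A B : ℝ) :
    dist ((A : ℝ) : AddCircle (2 * π)) ((B : ℝ) : AddCircle (2 * π)) ≤ dist A B := by
  rw [dist_eq_norm, dist_eq_norm, ← AddCircle.coe_sub]
  exact QuotientAddGroup.norm_mk_le_norm

set_option maxHeartbeats 1000000 in
theorem stmt_6 (K δ ξ a : ℝ) (hK : 0 < K) (hδ : 1 < δ)
    (Φ₁ Φ₂ : ℝ × ℝ → ℝ) (hc₁ : Continuous Φ₁) (hc₂ : Continuous Φ₂)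
    (hper₁ : ∀ x y : ℝ, Φ₁ (x + 2 * π, y) = Φ₁ (x, y))
    (hper₂ : ∀ x y : ℝ, Φ₂ (x + 2 * π, y) = Φ₂ (x, y))
    (hpos : ∀ x : ℝ, 0 < Φ₂ (x, 0)) :
    (∃ N : ℕ, ∀ n ≥ N, ∀ p : ℝ × ℝ, p ∈ Set.univ ×ˢ Set.Icc (0:ℝ) 1 →
        0 < p.2 + Φ₂ (p.1, Real.exp (-(2 * π * n + a) / K) * p.2)) ∧
    TendstoUniformlyOn
      (fun (n : ℕ) (p : ℝ × ℝ) =>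
        (((p.1 + ξ
              + Real.exp (-(2 * π * n + a) / K)
                * Φ₁ (p.1, Real.exp (-(2 * π * n + a) / K) * p.2)
              + a
              - K * Real.log (p.2 + Φ₂ (p.1, Real.exp (-(2 * π * n + a) / K) * p.2)) : ℝ) :
            AddCircle (2 * π)),
          Real.exp (-(2 * π * n + a) / K) ^ (δ - 1)
            * (p.2 + Φ₂ (p.1, Real.exp (-(2 * π * n + a) / K) * p.2)) ^ δ))
      (fun p : ℝ × ℝ =>
        (((p.1 + ξ + a - K * Real.log (p.2 + Φ₂ (p.1, 0)) : ℝ) : AddCircle (2 * π)),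
          (0 : ℝ)))
      Filter.atTop
      (Set.univ ×ˢ Set.Icc (0:ℝ) 1) := by
  have hπ := Real.pi_pos
  set L : ℕ → ℝ := fun n => Real.exp (-(2 * π * n + a) / K) with hLdef
  have hLpos : ∀ n, 0 < L n := fun n => Real.exp_pos _
  have hL0 : Filter.Tendsto L Filter.atTop (nhds 0) := by
    have h1 : Filter.Tendsto (fun n : ℕ => 2 * π * (n : ℝ) + a) Filter.atTop Filter.atTop :=
      Filter.tendsto_atTop_add_const_right _ a
        (Filter.Tendsto.const_mul_atTop (by positivity) tendsto_natCast_atTop_atTop)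
    have h2 : Filter.Tendsto (fun n : ℕ => -(2 * π * (n : ℝ) + a)) Filter.atTop Filter.atBot :=
      Filter.tendsto_neg_atBot_iff.mpr h1
    have h3 : Filter.Tendsto (fun n : ℕ => -(2 * π * (n : ℝ) + a) / K)
        Filter.atTop Filter.atBot := h2.atBot_div_const hK
    exact Real.tendsto_exp_atBot.comp h3
  have hP0 : Filter.Tendsto (fun n => L n ^ (δ - 1)) Filter.atTop (nhds 0) := by
    have hcont : ContinuousAt (fun x : ℝ => x ^ (δ - 1)) 0 :=
      Real.continuousAt_rpow_const 0 (δ - 1) (Or.inr (by linarith))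
    have h := hcont.tendsto.comp hL0
    rwa [Real.zero_rpow (by intro h'; nlinarith : δ - 1 ≠ 0)] at h
  obtain ⟨x₀, hx₀mem, hx₀min'⟩ :=
    isCompact_Icc.exists_isMinOn (Set.nonempty_Icc.mpr (by positivity))
      ((hc₂.comp (continuous_id.prodMk continuous_const)).continuousOn :
        ContinuousOn (fun x : ℝ => Φ₂ (x, 0)) (Set.Icc 0 (2 * π)))
  have hx₀min : ∀ x ∈ Set.Icc (0:ℝ) (2 * π), Φ₂ (x₀, 0) ≤ Φ₂ (x, 0) :=
    fun x hx => hx₀min' hx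
  set m : ℝ := Φ₂ (x₀, 0) with hmdef
  have hm : 0 < m := hpos x₀
  have hmall : ∀ x : ℝ, m ≤ Φ₂ (x, 0) := by
    intro x
    rw [per_reduce Φ₂ hper₂ x 0]
    exact hx₀min _ (fract_mem x)
  obtain ⟨M₁, hM₁⟩ := per_bdd Φ₁ hc₁ hper₁
  obtain ⟨M₂, hM₂⟩ := per_bdd Φ₂ hc₂ hper₂
  have hM₂m : m ≤ M₂ := le_trans (le_abs_self _) (hM₂ x₀ 0 (by norm_num))
  have hM₂0 : 0 < 1 + M₂ := by linarith
  obtain ⟨d₁, hd₁, hd₁p⟩ := per_uc Φ₂ hc₂ hper₂ (m / 2) (by positivity)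
  have hkey : ∀ n : ℕ, L n ≤ min d₁ 1 → ∀ x y : ℝ, y ∈ Set.Icc (0:ℝ) 1 →
      m / 2 ≤ y + Φ₂ (x, L n * y) ∧ y + Φ₂ (x, L n * y) ≤ 1 + M₂ := by
    intro n hn x y hy
    have hy0 : 0 ≤ y := hy.1
    have hy1 : y ≤ 1 := hy.2
    have hLn := hLpos n
    have habs : |L n * y| ≤ L n := by
      rw [abs_mul, abs_of_pos hLn, abs_of_nonneg hy0]
      nlinarith
    have h1 : |Φ₂ (x, L n * y) - Φ₂ (x, 0)| ≤ m / 2 :=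
      hd₁p x _ (habs.trans (hn.trans (min_le_left _ _)))
    have h2 : |Φ₂ (x, L n * y)| ≤ M₂ :=
      hM₂ x _ (habs.trans (hn.trans (min_le_right _ _)))
    have h3 := hmall x
    have h4 := abs_le.mp h1
    have h5 := abs_le.mp h2
    exact ⟨by nlinarith, by nlinarith⟩
  have hev1 : ∀ᶠ n in Filter.atTop, L n < min d₁ 1 :=
    hL0.eventually (gt_mem_nhds (lt_min hd₁ one_pos))
  constructor
  · obtain ⟨N, hN⟩ := Filter.eventually_atTop.mp hev1
    refine ⟨N, fun n hn p hp => ?_⟩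
    obtain ⟨-, hy⟩ := (Set.mem_prod).mp hp
    have h := (hkey n (hN n hn).le p.1 p.2 hy).1
    simp only [hLdef] at h
    linarith
  · rw [Metric.tendstoUniformlyOn_iff]
    intro ε hε
    set Cδ : ℝ := (1 + M₂) ^ δ with hCδdef
    have hCδ : 0 < Cδ := Real.rpow_pos_of_pos hM₂0 δ
    obtain ⟨d₂, hd₂, hd₂p⟩ := per_uc Φ₂ hc₂ hper₂ (ε * m / (8 * K)) (by positivity)
    have hev2 : ∀ᶠ n in Filter.atTop, L n < min d₂ (ε / 2 / (|M₁| + 1)) :=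
      hL0.eventually (gt_mem_nhds (lt_min hd₂ (by positivity)))
    have hev3 : ∀ᶠ n in Filter.atTop, L n ^ (δ - 1) < ε / Cδ :=
      hP0.eventually (gt_mem_nhds (by positivity))
    filter_upwards [hev1, hev2, hev3] with n h1 h2 h3
    intro p hp
    obtain ⟨-, hy⟩ := (Set.mem_prod).mp hp
    obtain ⟨hbd, hbu⟩ := hkey n h1.le p.1 p.2 hy
    simp only [hLdef] at hbd hbu h1 h2 h3
    set E : ℝ := Real.exp (-(2 * π * (n : ℝ) + a) / K) with hEdef
    have hy0 : 0 ≤ p.2 := hy.1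
    have hy1 : p.2 ≤ 1 := hy.2
    have hE : 0 < E := Real.exp_pos _
    set Yn : ℝ := p.2 + Φ₂ (p.1, E * p.2) with hYndef
    set Yi : ℝ := p.2 + Φ₂ (p.1, 0) with hYidef
    have hYipos : m / 2 ≤ Yi := by
      have := hmall p.1
      simp only [hYidef]
      linarith
    have hYiub : Yi ≤ 1 + M₂ := by
      have := hM₂ p.1 0 (by norm_num)
      have := (abs_le.mp this).2
      simp only [hYidef]
      linarith
    have hYnpos : 0 < Yn := lt_of_lt_of_le (by positivity) hbd
    rw [Prod.dist_eq, max_lt_iff]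
    constructor
    · refine lt_of_le_of_lt (addCircle_dist_le _ _) ?_
      rw [Real.dist_eq]
      have habs : |E * p.2| ≤ 1 := by
        rw [abs_mul, abs_of_pos hE, abs_of_nonneg hy0]
        have h1' : E ≤ 1 := (h1.trans_le (min_le_right _ _)).le
        nlinarith
      have hΦ₁bd : |Φ₁ (p.1, E * p.2)| ≤ |M₁| :=
        (hM₁ p.1 _ habs).trans (le_abs_self _)
      have hterm1 : |E * Φ₁ (p.1, E * p.2)| < ε / 2 := by
        rw [abs_mul, abs_of_pos hE]
        have h2' : E < ε / 2 / (|M₁| + 1) := h2.trans_le (min_le_right _ _)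
        have hM1pos : 0 < |M₁| + 1 := by positivity
        have habsΦ := abs_nonneg (Φ₁ (p.1, E * p.2))
        calc E * |Φ₁ (p.1, E * p.2)| ≤ E * (|M₁| + 1) := by nlinarith
          _ < ε / 2 / (|M₁| + 1) * (|M₁| + 1) := by nlinarith
          _ = ε / 2 := div_mul_cancel₀ _ (ne_of_gt hM1pos)
      have hΦdiff : |Φ₂ (p.1, E * p.2) - Φ₂ (p.1, 0)| ≤ ε * m / (8 * K) := by
        apply hd₂p
        rw [abs_mul, abs_of_pos hE, abs_of_nonneg hy0]
        have h2' : E ≤ d₂ := (h2.trans_le (min_le_left _ _)).le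
        nlinarith
      have hnum : |Yn - Yi| ≤ ε * m / (8 * K) := by
        have : Yn - Yi = Φ₂ (p.1, E * p.2) - Φ₂ (p.1, 0) := by
          simp only [hYndef, hYidef]; ring
        rw [this]
        exact hΦdiff
      have hlogdiff : |Real.log Yn - Real.log Yi| ≤ (ε * m / (8 * K)) / (m / 2) :=
        le_trans (log_lip (by positivity) hbd hYipos)
          ((div_le_div_iff_of_pos_right (by positivity)).mpr hnum)
      have hlog2 : K * |Real.log Yn - Real.log Yi| ≤ ε / 4 := by
        have heq : (ε * m / (8 * K)) / (m / 2) = ε / (4 * K) := by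
          field_simp
          ring
        rw [heq] at hlogdiff
        have habs0 := abs_nonneg (Real.log Yn - Real.log Yi)
        have : K * |Real.log Yn - Real.log Yi| ≤ K * (ε / (4 * K)) := by nlinarith
        have heq2 : K * (ε / (4 * K)) = ε / 4 := by field_simp
        linarith [heq2 ▸ this]
      calc |p.1 + ξ + a - K * Real.log Yi -
            (p.1 + ξ + E * Φ₁ (p.1, E * p.2) + a - K * Real.log Yn)|
          = |-(E * Φ₁ (p.1, E * p.2)) + K * (Real.log Yn - Real.log Yi)| := by
            ring_nf
        _ ≤ |-(E * Φ₁ (p.1, E * p.2))| + |K * (Real.log Yn - Real.log Yi)| :=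
            abs_add_le _ _
        _ = |E * Φ₁ (p.1, E * p.2)| + K * |Real.log Yn - Real.log Yi| := by
            rw [abs_neg, abs_mul, abs_mul, abs_of_pos hK]
        _ < ε / 2 + ε / 4 := by linarith
        _ < ε := by linarith
    · rw [Real.dist_eq]
      have hpow : Yn ^ δ ≤ Cδ := Real.rpow_le_rpow hYnpos.le hbu (by linarith)
      have hpow0 : 0 < Yn ^ δ := Real.rpow_pos_of_pos hYnpos δ
      have hLpow0 : 0 ≤ E ^ (δ - 1) := Real.rpow_nonneg hE.le _
      have hfinal : E ^ (δ - 1) * Yn ^ δ < ε := by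
        calc E ^ (δ - 1) * Yn ^ δ ≤ E ^ (δ - 1) * Cδ := by nlinarith
          _ < ε / Cδ * Cδ := by nlinarith
          _ = ε := by field_simp
      rw [abs_sub_comm, sub_zero, abs_of_nonneg (by positivity)]
      exact hfinal
end

section
/- Let K_ω ∈ ℝ, δ > 1, ξ ∈ ℝ, and let Φ₁, Φ₂ : ℝ × ℝ → ℝ be C¹ functions that are 2π-periodic in their first variable and such that Φ₂(x, y) > 0 for all (x,y) ∈ ℝ × [0,1]. Then there exist λ₂ ∈ (0,1) and k > 1 such that for every λ ∈ (0, λ₂) and all (x₁, ȳ₁), (x₂, ȳ₂) ∈ ℝ × [0,1], the first return map F_λ = η ∘ Ψ_λ is differentiable at the rescaled points (x₁, λȳ₁) and (x₂, λȳ₂), the determinants det DF_λ(x₁, λȳ₁) and det DF_λ(x₂, λȳ₂) are nonzero, and |det DF_λ(x₁, λȳ₁)| ≤ k·|det DF_λ(x₂, λȳ₂)|. -/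
open Real

/-- The local map past the two saddle-foci (in local coordinates). -/
noncomputable def etaMap (K δ : ℝ) : ℝ × ℝ → ℝ × ℝ :=
  fun p => (p.1 - K * Real.log p.2, p.2 ^ δ)

/-- The global transition map along the broken 2-dimensional connection. -/
noncomputable def psiMap (ξ lam : ℝ) (Φ₁ Φ₂ : ℝ × ℝ → ℝ) : ℝ × ℝ → ℝ × ℝ :=
  fun p => (p.1 + ξ + lam * Φ₁ p, p.2 + lam * Φ₂ p)

/-- Determinant of a continuous linear endomorphism of `ℝ × ℝ` in terms of its matrix
entries. -/
lemma det_formula (L : (ℝ×ℝ) →L[ℝ] ℝ×ℝ) :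
    LinearMap.det (L : (ℝ×ℝ) →ₗ[ℝ] ℝ×ℝ)
      = (L (1,0)).1 * (L (0,1)).2 - (L (0,1)).1 * (L (1,0)).2 := by
  have h : (L : (ℝ×ℝ) →ₗ[ℝ] ℝ×ℝ)
      = Matrix.toLin (Module.Basis.finTwoProd ℝ) (Module.Basis.finTwoProd ℝ)
          !![(L (1,0)).1, (L (0,1)).1; (L (1,0)).2, (L (0,1)).2] := by
    apply LinearMap.ext
    intro x
    rw [Matrix.toLin_finTwoProd_apply]
    have hx : (x : ℝ×ℝ) = x.1 • ((1:ℝ),(0:ℝ)) + x.2 • ((0:ℝ),(1:ℝ)) := by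
      ext <;> simp
    show L x = _
    conv_lhs => rw [hx, map_add, map_smul, map_smul]
    ext <;> simp [mul_comm]
  rw [h, LinearMap.det_toLin, Matrix.det_fin_two_of]

lemma reduce_period (x : ℝ) : ∃ x₀ ∈ Set.Icc (0:ℝ) (2*π), ∃ n : ℤ, x = x₀ + n * (2*π) := by
  have h2π : (0:ℝ) < 2*π := by positivity
  have h1 : (⌊x/(2*π)⌋ : ℝ) * (2*π) ≤ x := by
    rw [← le_div_iff₀ h2π]; exact Int.floor_le _
  have h2 : x < ((⌊x/(2*π)⌋ : ℝ) + 1) * (2*π) := by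
    rw [← div_lt_iff₀ h2π]; exact Int.lt_floor_add_one _
  exact ⟨x - ⌊x/(2*π)⌋ * (2*π), ⟨by linarith, by nlinarith⟩, ⌊x/(2*π)⌋, by ring⟩

lemma strip_reduce {α : Type*} (g : ℝ×ℝ → α) (hper : ∀ x y, g (x + 2*π, y) = g (x,y))
    (x y : ℝ) : ∃ x₀ ∈ Set.Icc (0:ℝ) (2*π), g (x, y) = g (x₀, y) := by
  obtain ⟨x₀, hx₀, n, rfl⟩ := reduce_period x
  refine ⟨x₀, hx₀, ?_⟩
  have hp : Function.Periodic (fun t => g (t, y)) (2*π) := fun t => hper t y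
  exact (hp.int_mul n) x₀

/-- Attained min and max of a periodic continuous function on the strip `ℝ × [0,1]`. -/
lemma strip_min_max (g : ℝ×ℝ → ℝ) (hg : Continuous g)
    (hper : ∀ x y, g (x + 2*π, y) = g (x,y)) :
    ∃ p₀ ∈ Set.Icc (0:ℝ) (2*π) ×ˢ Set.Icc (0:ℝ) 1,
      ∃ p₁ : ℝ×ℝ, ∀ x : ℝ, ∀ y ∈ Set.Icc (0:ℝ) 1, g p₀ ≤ g (x,y) ∧ g (x,y) ≤ g p₁ := by
  have hK : IsCompact (Set.Icc (0:ℝ) (2*π) ×ˢ Set.Icc (0:ℝ) 1) :=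
    isCompact_Icc.prod isCompact_Icc
  have hne : (Set.Icc (0:ℝ) (2*π) ×ˢ Set.Icc (0:ℝ) 1).Nonempty := by
    refine ⟨(0,0), ?_⟩
    constructor <;> constructor <;> [skip; positivity; skip; norm_num] <;> norm_num
  obtain ⟨p₀, hp₀, hmin⟩ := hK.exists_isMinOn hne hg.continuousOn
  obtain ⟨p₁, hp₁, hmax⟩ := hK.exists_isMaxOn hne hg.continuousOn
  refine ⟨p₀, hp₀, p₁, fun x y hy => ?_⟩
  obtain ⟨x₀, hx₀, he⟩ := strip_reduce g hper x y
  rw [he]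
  exact ⟨hmin ⟨hx₀, hy⟩, hmax ⟨hx₀, hy⟩⟩

lemma hasFDerivEta (K δ : ℝ) {q : ℝ×ℝ} (hq : 0 < q.2) :
    HasFDerivAt (etaMap K δ)
      (((ContinuousLinearMap.fst ℝ ℝ ℝ) - (K / q.2) • ContinuousLinearMap.snd ℝ ℝ ℝ).prod
        ((δ * q.2 ^ (δ-1)) • ContinuousLinearMap.snd ℝ ℝ ℝ)) q := by
  have h1 : HasFDerivAt (fun p : ℝ×ℝ => p.1 - K * Real.log p.2)
      ((ContinuousLinearMap.fst ℝ ℝ ℝ) - (K / q.2) • ContinuousLinearMap.snd ℝ ℝ ℝ) q := by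
    have hlog : HasFDerivAt (fun p : ℝ×ℝ => Real.log p.2)
        (q.2⁻¹ • ContinuousLinearMap.snd ℝ ℝ ℝ) q := by
      have h := (Real.hasDerivAt_log hq.ne').comp_hasFDerivAt q
        (hasFDerivAt_snd (𝕜 := ℝ) (E := ℝ) (F := ℝ))
      exact h
    have h := hasFDerivAt_fst.sub (hlog.const_mul K)
    have e : (ContinuousLinearMap.fst ℝ ℝ ℝ) - (K / q.2) • ContinuousLinearMap.snd ℝ ℝ ℝ
        = ContinuousLinearMap.fst ℝ ℝ ℝ - K • q.2⁻¹ • ContinuousLinearMap.snd ℝ ℝ ℝ :=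
      ContinuousLinearMap.ext fun v => by
        simp [div_eq_mul_inv, mul_assoc]
    rw [e]; exact h
  have h2 : HasFDerivAt (fun p : ℝ×ℝ => p.2 ^ δ)
      ((δ * q.2 ^ (δ-1)) • ContinuousLinearMap.snd ℝ ℝ ℝ) q := by
    have h := (Real.hasDerivAt_rpow_const (p := δ) (Or.inl hq.ne')).comp_hasFDerivAt q
      (hasFDerivAt_snd (𝕜 := ℝ) (E := ℝ) (F := ℝ))
    exact h
  exact h1.prodMk h2

lemma hasFDerivPsi (ξ lam : ℝ) (Φ₁ Φ₂ : ℝ × ℝ → ℝ)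
    (hΦ₁ : ContDiff ℝ 1 Φ₁) (hΦ₂ : ContDiff ℝ 1 Φ₂) (p : ℝ×ℝ) :
    HasFDerivAt (psiMap ξ lam Φ₁ Φ₂)
      ((ContinuousLinearMap.fst ℝ ℝ ℝ + lam • fderiv ℝ Φ₁ p).prod
        (ContinuousLinearMap.snd ℝ ℝ ℝ + lam • fderiv ℝ Φ₂ p)) p := by
  have d₁ := (hΦ₁.differentiable one_ne_zero p).hasFDerivAt
  have d₂ := (hΦ₂.differentiable one_ne_zero p).hasFDerivAt
  have h1 : HasFDerivAt (fun p : ℝ×ℝ => p.1 + ξ + lam * Φ₁ p)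
      (ContinuousLinearMap.fst ℝ ℝ ℝ + lam • fderiv ℝ Φ₁ p) p :=
    (hasFDerivAt_fst.add_const ξ).add (d₁.const_mul lam)
  have h2 : HasFDerivAt (fun p : ℝ×ℝ => p.2 + lam * Φ₂ p)
      (ContinuousLinearMap.snd ℝ ℝ ℝ + lam • fderiv ℝ Φ₂ p) p :=
    hasFDerivAt_snd.add (d₂.const_mul lam)
  exact h1.prodMk h2

lemma fderiv_shift {E : Type*} [NormedAddCommGroup E] [NormedSpace ℝ E]
    (g : (ℝ×ℝ) → E) (c p : ℝ×ℝ) (hg : DifferentiableAt ℝ g (p + c)) :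
    fderiv ℝ (fun q => g (q + c)) p = fderiv ℝ g (p + c) := by
  have h : HasFDerivAt (fun q => g (q + c)) (fderiv ℝ g (p + c)) p := by
    have := hg.hasFDerivAt.comp p ((hasFDerivAt_id p).add_const c)
    exact this
  exact h.fderiv

lemma fderiv_periodic {g : ℝ×ℝ → ℝ} (hg : ContDiff ℝ 1 g)
    (hper : ∀ x y : ℝ, g (x + 2 * π, y) = g (x, y)) (x y : ℝ) :
    fderiv ℝ g (x + 2*π, y) = fderiv ℝ g (x, y) := by
  have hhead : (fun q : ℝ×ℝ => g (q + ((2*π:ℝ),(0:ℝ)))) = g := by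
    funext q
    have h := hper q.1 q.2
    have e : (q + ((2*π:ℝ),(0:ℝ))) = ((q.1 + 2*π, q.2) : ℝ×ℝ) := by ext <;> simp
    rw [e, h]
  have e1 : (((x,y) : ℝ×ℝ) + ((2*π:ℝ),(0:ℝ))) = ((x+2*π, y) : ℝ×ℝ) := by ext <;> simp
  rw [← e1, ← fderiv_shift g _ _ (hg.differentiable one_ne_zero _), hhead]

set_option maxHeartbeats 1000000 in
theorem stmt_10 (K δ ξ : ℝ) (hδ : 1 < δ) (Φ₁ Φ₂ : ℝ × ℝ → ℝ)
    (hΦ₁ : ContDiff ℝ 1 Φ₁) (hΦ₂ : ContDiff ℝ 1 Φ₂)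
    (hper₁ : ∀ x y : ℝ, Φ₁ (x + 2 * π, y) = Φ₁ (x, y))
    (hper₂ : ∀ x y : ℝ, Φ₂ (x + 2 * π, y) = Φ₂ (x, y))
    (hpos : ∀ x : ℝ, ∀ y ∈ Set.Icc (0:ℝ) 1, 0 < Φ₂ (x, y)) :
    ∃ lam₂ : ℝ, 0 < lam₂ ∧ lam₂ < 1 ∧ ∃ k : ℝ, 1 < k ∧
      ∀ lam : ℝ, 0 < lam → lam < lam₂ →
        ∀ x₁ x₂ : ℝ, ∀ y₁ ∈ Set.Icc (0:ℝ) 1, ∀ y₂ ∈ Set.Icc (0:ℝ) 1,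
          DifferentiableAt ℝ (etaMap K δ ∘ psiMap ξ lam Φ₁ Φ₂) (x₁, lam * y₁) ∧
          DifferentiableAt ℝ (etaMap K δ ∘ psiMap ξ lam Φ₁ Φ₂) (x₂, lam * y₂) ∧
          LinearMap.det
              ((fderiv ℝ (etaMap K δ ∘ psiMap ξ lam Φ₁ Φ₂) (x₁, lam * y₁) :
                  (ℝ × ℝ) →L[ℝ] ℝ × ℝ) : (ℝ × ℝ) →ₗ[ℝ] ℝ × ℝ) ≠ 0 ∧
          LinearMap.det
              ((fderiv ℝ (etaMap K δ ∘ psiMap ξ lam Φ₁ Φ₂) (x₂, lam * y₂) :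
                  (ℝ × ℝ) →L[ℝ] ℝ × ℝ) : (ℝ × ℝ) →ₗ[ℝ] ℝ × ℝ) ≠ 0 ∧
          |LinearMap.det
              ((fderiv ℝ (etaMap K δ ∘ psiMap ξ lam Φ₁ Φ₂) (x₁, lam * y₁) :
                  (ℝ × ℝ) →L[ℝ] ℝ × ℝ) : (ℝ × ℝ) →ₗ[ℝ] ℝ × ℝ)| ≤
            k * |LinearMap.det
              ((fderiv ℝ (etaMap K δ ∘ psiMap ξ lam Φ₁ Φ₂) (x₂, lam * y₂) :
                  (ℝ × ℝ) →L[ℝ] ℝ × ℝ) : (ℝ × ℝ) →ₗ[ℝ] ℝ × ℝ)| := by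
  -- bounds on Φ₂
  obtain ⟨p₀, hp₀, p₁, hb₂⟩ := strip_min_max Φ₂ hΦ₂.continuous hper₂
  set m : ℝ := Φ₂ p₀ with hm_def
  set M : ℝ := Φ₂ p₁ with hM_def
  have hm0 : 0 < m := by
    have := hpos p₀.1 p₀.2 hp₀.2
    simpa using this
  have hmM : m ≤ M := by
    have h := hb₂ 0 0 ⟨le_refl 0, zero_le_one⟩
    linarith [h.1, h.2]
  -- bounds on the derivatives of Φ₁, Φ₂
  have hfc₁ : Continuous fun p : ℝ×ℝ => ‖fderiv ℝ Φ₁ p‖ :=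
    (hΦ₁.continuous_fderiv one_ne_zero).norm
  have hfc₂ : Continuous fun p : ℝ×ℝ => ‖fderiv ℝ Φ₂ p‖ :=
    (hΦ₂.continuous_fderiv one_ne_zero).norm
  obtain ⟨_, _, q₁, hD₁⟩ := strip_min_max (fun p => ‖fderiv ℝ Φ₁ p‖) hfc₁
    (fun x y => congrArg norm (fderiv_periodic hΦ₁ hper₁ x y))
  obtain ⟨_, _, q₂, hD₂⟩ := strip_min_max (fun p => ‖fderiv ℝ Φ₂ p‖) hfc₂
    (fun x y => congrArg norm (fderiv_periodic hΦ₂ hper₂ x y))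
  set C : ℝ := ‖fderiv ℝ Φ₁ q₁‖ + ‖fderiv ℝ Φ₂ q₂‖ with hC_def
  have hC0 : 0 ≤ C := by positivity
  have hC₁ : ∀ x : ℝ, ∀ y ∈ Set.Icc (0:ℝ) 1, ‖fderiv ℝ Φ₁ (x,y)‖ ≤ C := by
    intro x y hy
    have := (hD₁ x y hy).2
    have h2 : (0:ℝ) ≤ ‖fderiv ℝ Φ₂ q₂‖ := norm_nonneg _
    simp only [hC_def]; linarith
  have hC₂ : ∀ x : ℝ, ∀ y ∈ Set.Icc (0:ℝ) 1, ‖fderiv ℝ Φ₂ (x,y)‖ ≤ C := by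
    intro x y hy
    have := (hD₂ x y hy).2
    have h1 : (0:ℝ) ≤ ‖fderiv ℝ Φ₁ q₁‖ := norm_nonneg _
    simp only [hC_def]; linarith
  -- the constants
  refine ⟨min (1/2) (1/(4*(C+1))), lt_min (by norm_num) (by positivity),
    lt_of_le_of_lt (min_le_left _ _) (by norm_num),
    4 * ((1+M)/m) ^ (δ-1), ?_, ?_⟩
  · have hx1 : (1:ℝ) ≤ (1+M)/m := by
      rw [le_div_iff₀ hm0]; linarith
    have := Real.one_le_rpow hx1 (by linarith : (0:ℝ) ≤ δ - 1)
    linarith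
  intro lam hlam0 hlam2 x₁ x₂ y₁ hy₁ y₂ hy₂
  have hlam_half : lam < 1/2 := lt_of_lt_of_le hlam2 (min_le_left _ _)
  have hlamC : lam * (C + 1) ≤ 1/4 := by
    have h := lt_of_lt_of_le hlam2 (min_le_right _ _)
    have hC1 : (0:ℝ) < C + 1 := by linarith
    rw [lt_div_iff₀ (by positivity : (0:ℝ) < 4*(C+1))] at h
    nlinarith
  have hδ0 : (0:ℝ) < δ := by linarith
  have hδ1 : (0:ℝ) ≤ δ - 1 := by linarith
  have hnorm10 : ‖((1:ℝ),(0:ℝ))‖ = 1 := by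
    simp [Prod.norm_def]
  have hnorm01 : ‖((0:ℝ),(1:ℝ))‖ = 1 := by
    simp [Prod.norm_def]
  have habs : ∀ (g : (ℝ×ℝ) →L[ℝ] ℝ) (e : ℝ×ℝ), ‖e‖ = 1 → ‖g‖ ≤ C → |lam * g e| ≤ 1/4 := by
    intro g e he hg
    have h1 : |g e| ≤ C := by
      calc |g e| = ‖g e‖ := (Real.norm_eq_abs _).symm
      _ ≤ ‖g‖ * ‖e‖ := g.le_opNorm e
      _ = ‖g‖ := by rw [he, mul_one]
      _ ≤ C := hg
    rw [abs_mul, abs_of_pos hlam0]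
    nlinarith [abs_nonneg (g e)]
  -- main computation at a single point
  have main : ∀ x : ℝ, ∀ y ∈ Set.Icc (0:ℝ) 1,
      DifferentiableAt ℝ (etaMap K δ ∘ psiMap ξ lam Φ₁ Φ₂) (x, lam*y) ∧
      ∃ v d : ℝ, lam*m ≤ v ∧ v ≤ lam*(1+M) ∧ 1/2 ≤ d ∧ d ≤ 2 ∧
        LinearMap.det
            ((fderiv ℝ (etaMap K δ ∘ psiMap ξ lam Φ₁ Φ₂) (x, lam*y) :
                (ℝ × ℝ) →L[ℝ] ℝ × ℝ) : (ℝ × ℝ) →ₗ[ℝ] ℝ × ℝ) = δ * v ^ (δ-1) * d := by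
    intro x y hy
    have hy' : lam * y ∈ Set.Icc (0:ℝ) 1 := by
      constructor
      · exact mul_nonneg hlam0.le hy.1
      · nlinarith [hy.1, hy.2]
    set p : ℝ×ℝ := (x, lam*y) with hp_def
    have hψ := hasFDerivPsi ξ lam Φ₁ Φ₂ hΦ₁ hΦ₂ p
    have hΦ₂p : 0 < Φ₂ p := hpos x (lam*y) hy'
    have hq2 : (psiMap ξ lam Φ₁ Φ₂ p).2 = lam * (y + Φ₂ p) := by
      simp [psiMap, hp_def]; ring
    have hqpos : 0 < (psiMap ξ lam Φ₁ Φ₂ p).2 := by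
      rw [hq2]
      have : 0 < y + Φ₂ p := by linarith [hy.1]
      positivity
    have hη := hasFDerivEta K δ hqpos
    have hcomp := hη.comp p hψ
    -- abs bounds on matrix entries
    have hA := abs_le.mp (habs (fderiv ℝ Φ₁ p) (1,0) hnorm10 (hC₁ x _ hy'))
    have hB := abs_le.mp (habs (fderiv ℝ Φ₁ p) (0,1) hnorm01 (hC₁ x _ hy'))
    have hCc := abs_le.mp (habs (fderiv ℝ Φ₂ p) (1,0) hnorm10 (hC₂ x _ hy'))
    have hD := abs_le.mp (habs (fderiv ℝ Φ₂ p) (0,1) hnorm01 (hC₂ x _ hy'))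
    have hbc₁ : lam * fderiv ℝ Φ₁ p (0,1) * (lam * fderiv ℝ Φ₂ p (1,0)) ≤ 1/16 := by
      nlinarith [hB.1, hB.2, hCc.1, hCc.2]
    have hbc₂ : -(1/16) ≤ lam * fderiv ℝ Φ₁ p (0,1) * (lam * fderiv ℝ Φ₂ p (1,0)) := by
      nlinarith [hB.1, hB.2, hCc.1, hCc.2]
    refine ⟨hcomp.differentiableAt, lam * (y + Φ₂ p),
      (1 + lam * fderiv ℝ Φ₁ p (1,0)) * (1 + lam * fderiv ℝ Φ₂ p (0,1))
        - lam * fderiv ℝ Φ₁ p (0,1) * (lam * fderiv ℝ Φ₂ p (1,0)), ?_, ?_, ?_, ?_, ?_⟩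
    · have h := hb₂ x (lam*y) hy'
      nlinarith [hy.1, h.1]
    · have h := hb₂ x (lam*y) hy'
      nlinarith [hy.2, h.2]
    · nlinarith [hA.1, hA.2, hD.1, hD.2, hbc₁]
    · nlinarith [hA.1, hA.2, hD.1, hD.2, hbc₂]
    · rw [hcomp.fderiv, ContinuousLinearMap.toLinearMap_comp, LinearMap.det_comp,
        det_formula, det_formula]
      simp [hq2]
  obtain ⟨hdiff₁, v₁, d₁, hv₁l, hv₁u, hd₁l, hd₁u, hdet₁⟩ := main x₁ y₁ hy₁
  obtain ⟨hdiff₂, v₂, d₂, hv₂l, hv₂u, hd₂l, hd₂u, hdet₂⟩ := main x₂ y₂ hy₂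
  have hv₁0 : 0 < v₁ := lt_of_lt_of_le (mul_pos hlam0 hm0) hv₁l
  have hv₂0 : 0 < v₂ := lt_of_lt_of_le (mul_pos hlam0 hm0) hv₂l
  have hpos₁ : 0 < δ * v₁ ^ (δ-1) * d₁ :=
    mul_pos (mul_pos hδ0 (Real.rpow_pos_of_pos hv₁0 _)) (by linarith)
  have hpos₂ : 0 < δ * v₂ ^ (δ-1) * d₂ :=
    mul_pos (mul_pos hδ0 (Real.rpow_pos_of_pos hv₂0 _)) (by linarith)
  refine ⟨hdiff₁, hdiff₂, by rw [hdet₁]; exact hpos₁.ne', by rw [hdet₂]; exact hpos₂.ne', ?_⟩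
  rw [hdet₁, hdet₂, abs_of_pos hpos₁, abs_of_pos hpos₂]
  set P : ℝ := ((1+M)/m) ^ (δ-1) with hP_def
  have hP : 0 < P := Real.rpow_pos_of_pos (div_pos (by linarith) hm0) _
  have hvv : v₁ ^ (δ-1) ≤ P * v₂ ^ (δ-1) := by
    have h1 : v₁ ≤ ((1+M)/m) * v₂ := by
      have he : ((1+M)/m) * (lam*m) = lam*(1+M) := by field_simp
      calc v₁ ≤ lam*(1+M) := hv₁u
      _ = ((1+M)/m)*(lam*m) := he.symm
      _ ≤ ((1+M)/m)*v₂ := mul_le_mul_of_nonneg_left hv₂l (div_pos (by linarith : (0:ℝ) < 1+M) hm0).le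
    calc v₁ ^ (δ-1) ≤ (((1+M)/m)*v₂) ^ (δ-1) := Real.rpow_le_rpow hv₁0.le h1 hδ1
    _ = P * v₂ ^ (δ-1) := Real.mul_rpow (div_pos (by linarith : (0:ℝ) < 1+M) hm0).le hv₂0.le
  have hV₂ : 0 < v₂ ^ (δ-1) := Real.rpow_pos_of_pos hv₂0 _
  have s1 : v₁ ^ (δ-1) * d₁ ≤ (P * v₂ ^ (δ-1)) * 2 :=
    mul_le_mul hvv hd₁u (by linarith) (mul_pos hP hV₂).le
  have s2 : δ * (v₁ ^ (δ-1) * d₁) ≤ δ * ((P * v₂ ^ (δ-1)) * 2) :=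
    mul_le_mul_of_nonneg_left s1 hδ0.le
  nlinarith [s2, mul_nonneg (mul_pos (by linarith : (0:ℝ) < 4*P) (mul_pos hδ0 hV₂)).le
    (by linarith : (0:ℝ) ≤ d₂ - 1/2)]
end

section
/- Let δ > 1, ξ ∈ ℝ, and let Φ₂ : ℝ × ℝ → ℝ be a C¹ function, 2π-periodic in its first variable, with Φ₂(x,y) > 0 for all (x,y) ∈ ℝ × [0,1]. Then for every ρ ∈ (0,1) there exists λ* > 0 such that for all λ ∈ (0, λ*) and all (x, ȳ) ∈ ℝ × [0,1], the rescaled second component of the return map, ȳ ↦ λ^{δ−1}·(ȳ + Φ₂(x, λȳ))^δ, is differentiable in ȳ with |∂/∂ȳ [ λ^{δ−1}·(ȳ + Φ₂(x, λȳ))^δ ]| = λ^{δ−1}·δ·(ȳ + Φ₂(x,λȳ))^{δ−1}·|1 + λ·∂Φ₂/∂y(x,λȳ)| ≤ ρ. -/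
open Real

lemma fderiv_per (Φ₂ : ℝ × ℝ → ℝ) (hΦ₂ : ContDiff ℝ 1 Φ₂)
    (hper : ∀ x y : ℝ, Φ₂ (x + 2 * π, y) = Φ₂ (x, y)) (p : ℝ × ℝ) :
    fderiv ℝ Φ₂ (p.1 + 2 * π, p.2) = fderiv ℝ Φ₂ p := by
  have hdiff := hΦ₂.differentiable one_ne_zero
  have heq : (fun q : ℝ × ℝ => Φ₂ (q + ((2*π : ℝ), (0:ℝ)))) = Φ₂ := by
    funext q
    have h : q + ((2*π:ℝ),(0:ℝ)) = (q.1 + 2*π, q.2) := by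
      simp [Prod.ext_iff]
    rw [h, hper]
  have h1 : HasFDerivAt (fun q : ℝ × ℝ => Φ₂ (q + ((2*π:ℝ), (0:ℝ))))
      (fderiv ℝ Φ₂ (p + ((2*π:ℝ), (0:ℝ)))) p := by
    have := ((hdiff (p + ((2*π:ℝ),(0:ℝ)))).hasFDerivAt).comp p
      ((hasFDerivAt_id p).add_const ((2*π:ℝ),(0:ℝ)))
    exact this
  rw [heq] at h1
  rw [h1.fderiv]
  congr 1
  simp [Prod.ext_iff]

lemma reduce_per (g : ℝ × ℝ → ℝ) (hg : ∀ x y : ℝ, g (x + 2 * π, y) = g (x, y))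
    (x y : ℝ) : ∃ x' ∈ Set.Icc (0:ℝ) (2 * π), g (x, y) = g (x', y) := by
  have h2π : (0:ℝ) < 2 * π := by positivity
  have hgp : Function.Periodic (fun t => g (t, y)) (2 * π) := fun t => hg t y
  refine ⟨x - ⌊x / (2 * π)⌋ * (2 * π),
    ⟨Int.sub_floor_div_mul_nonneg x h2π, (Int.sub_floor_div_mul_lt x h2π).le⟩, ?_⟩
  exact (hgp.sub_int_mul_eq ⌊x / (2 * π)⌋).symm

theorem stmt_13 (δ ξ : ℝ) (hδ : 1 < δ) (Φ₂ : ℝ × ℝ → ℝ)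
    (hΦ₂ : ContDiff ℝ 1 Φ₂)
    (hper : ∀ x y : ℝ, Φ₂ (x + 2 * π, y) = Φ₂ (x, y))
    (hpos : ∀ x : ℝ, ∀ y ∈ Set.Icc (0:ℝ) 1, 0 < Φ₂ (x, y)) :
    ∀ ρ : ℝ, 0 < ρ → ρ < 1 →
      ∃ lamStar : ℝ, 0 < lamStar ∧
        ∀ lam : ℝ, 0 < lam → lam < lamStar →
          ∀ x : ℝ, ∀ ybar ∈ Set.Icc (0:ℝ) 1,
            HasDerivAt (fun t : ℝ => lam ^ (δ - 1) * (t + Φ₂ (x, lam * t)) ^ δ)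
              (lam ^ (δ - 1) * δ * (ybar + Φ₂ (x, lam * ybar)) ^ (δ - 1)
                * (1 + lam * fderiv ℝ Φ₂ (x, lam * ybar) (0, 1))) ybar ∧
            |lam ^ (δ - 1) * δ * (ybar + Φ₂ (x, lam * ybar)) ^ (δ - 1)
                * (1 + lam * fderiv ℝ Φ₂ (x, lam * ybar) (0, 1))| =
              lam ^ (δ - 1) * δ * (ybar + Φ₂ (x, lam * ybar)) ^ (δ - 1)
                * |1 + lam * fderiv ℝ Φ₂ (x, lam * ybar) (0, 1)| ∧
            |lam ^ (δ - 1) * δ * (ybar + Φ₂ (x, lam * ybar)) ^ (δ - 1)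
                * (1 + lam * fderiv ℝ Φ₂ (x, lam * ybar) (0, 1))| ≤ ρ := by
  intro ρ hρ0 hρ1
  have hdiff := hΦ₂.differentiable one_ne_zero
  have h2π : (0:ℝ) < 2 * π := by positivity
  -- compact set and bounds
  set K : Set (ℝ × ℝ) := Set.Icc (0:ℝ) (2 * π) ×ˢ Set.Icc (0:ℝ) 1 with hK
  have hKc : IsCompact K := (isCompact_Icc).prod isCompact_Icc
  have hKne : K.Nonempty := ⟨(0, 0), by constructor <;> constructor <;> norm_num [h2π.le]⟩
  obtain ⟨p1, _, hmax1⟩ := hKc.exists_isMaxOn hKne (hΦ₂.continuous.continuousOn)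
  obtain ⟨p2, _, hmax2⟩ := hKc.exists_isMaxOn hKne
    ((hΦ₂.continuous_fderiv one_ne_zero).norm.continuousOn)
  set M1 : ℝ := max 0 (Φ₂ p1) with hM1
  set M2 : ℝ := max 0 (‖fderiv ℝ Φ₂ p2‖) with hM2
  have hM1' : 0 ≤ M1 := le_max_left _ _
  have hM2' : 0 ≤ M2 := le_max_left _ _
  -- global bounds on ℝ × [0,1]
  have hbΦ : ∀ x : ℝ, ∀ y ∈ Set.Icc (0:ℝ) 1, Φ₂ (x, y) ≤ M1 := by
    intro x y hy
    obtain ⟨x', hx', hxy⟩ := reduce_per Φ₂ hper x y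
    rw [hxy]
    exact le_trans (hmax1 (Set.mk_mem_prod hx' hy)) (le_max_right _ _)
  have hbD : ∀ x : ℝ, ∀ y ∈ Set.Icc (0:ℝ) 1, ‖fderiv ℝ Φ₂ (x, y)‖ ≤ M2 := by
    intro x y hy
    have hgper : ∀ x y : ℝ, ‖fderiv ℝ Φ₂ (x + 2 * π, y)‖ = ‖fderiv ℝ Φ₂ (x, y)‖ := by
      intro x y; rw [show ((x + 2*π, y) : ℝ × ℝ) = (((x,y) : ℝ × ℝ).1 + 2*π, ((x,y) : ℝ×ℝ).2) from rfl,
        fderiv_per Φ₂ hΦ₂ hper]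
    obtain ⟨x', hx', hxy⟩ := reduce_per (fun p => ‖fderiv ℝ Φ₂ p‖) hgper x y
    rw [hxy]
    exact le_trans (hmax2 (Set.mk_mem_prod hx' hy)) (le_max_right _ _)
  -- constants
  set C : ℝ := δ * (1 + M1) ^ (δ - 1) * (1 + M2) with hC
  have hδ1 : (0:ℝ) < δ - 1 := by linarith
  have hB0 : (0:ℝ) < (1 + M1) ^ (δ - 1) := rpow_pos_of_pos (by linarith) _
  have hC0 : 0 < C := by positivity
  set lamStar : ℝ := min 1 ((ρ / C) ^ (1 / (δ - 1))) with hlamStar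
  have hρC : 0 < ρ / C := div_pos hρ0 hC0
  refine ⟨lamStar, lt_min one_pos (rpow_pos_of_pos hρC _), ?_⟩
  intro lam hlam0 hlamS x ybar hybar
  have hlam1 : lam < 1 := lt_of_lt_of_le hlamS (min_le_left _ _)
  have hy01 : lam * ybar ∈ Set.Icc (0:ℝ) 1 := by
    constructor
    · exact mul_nonneg hlam0.le hybar.1
    · calc lam * ybar ≤ 1 * 1 := mul_le_mul hlam1.le hybar.2 hybar.1 zero_le_one
        _ = 1 := one_mul 1
  have hΦpos := hpos x _ hy01
  set D : ℝ := fderiv ℝ Φ₂ (x, lam * ybar) (0, 1) with hD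
  have hu0 : 0 < ybar + Φ₂ (x, lam * ybar) := by
    have := hybar.1; linarith
  -- derivative
  have hderiv : HasDerivAt (fun t : ℝ => lam ^ (δ - 1) * (t + Φ₂ (x, lam * t)) ^ δ)
      (lam ^ (δ - 1) * δ * (ybar + Φ₂ (x, lam * ybar)) ^ (δ - 1) * (1 + lam * D)) ybar := by
    have hc : HasDerivAt (fun t : ℝ => ((x : ℝ), lam * t)) ((0:ℝ), lam) ybar := by
      have := (hasDerivAt_const ybar x).prodMk ((hasDerivAt_id ybar).const_mul lam)
      simpa using this
    have hΦd : HasDerivAt (fun t : ℝ => Φ₂ (x, lam * t))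
        (fderiv ℝ Φ₂ (x, lam * ybar) ((0:ℝ), lam)) ybar :=
      ((hdiff (x, lam * ybar)).hasFDerivAt).comp_hasDerivAt ybar hc
    have hlin : fderiv ℝ Φ₂ (x, lam * ybar) ((0:ℝ), lam) = lam * D := by
      have : ((0:ℝ), lam) = lam • ((0:ℝ), (1:ℝ)) := by simp [Prod.ext_iff]
      rw [this, map_smul]; simp [hD, smul_eq_mul]
    rw [hlin] at hΦd
    have hu : HasDerivAt (fun t : ℝ => t + Φ₂ (x, lam * t)) (1 + lam * D) ybar :=
      (hasDerivAt_id ybar).add hΦd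
    have hr : HasDerivAt (fun s : ℝ => s ^ δ)
        (δ * (ybar + Φ₂ (x, lam * ybar)) ^ (δ - 1)) (ybar + Φ₂ (x, lam * ybar)) :=
      hasDerivAt_rpow_const (Or.inl hu0.ne')
    have := (hr.comp ybar hu).const_mul (lam ^ (δ - 1))
    rw [show lam ^ (δ - 1) * δ * (ybar + Φ₂ (x, lam * ybar)) ^ (δ - 1) * (1 + lam * D) = lam ^ (δ - 1) * (δ * (ybar + Φ₂ (x, lam * ybar)) ^ (δ - 1) * (1 + lam * D)) by ring]
    exact this
  have habs : |lam ^ (δ - 1) * δ * (ybar + Φ₂ (x, lam * ybar)) ^ (δ - 1) * (1 + lam * D)|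
      = lam ^ (δ - 1) * δ * (ybar + Φ₂ (x, lam * ybar)) ^ (δ - 1) * |1 + lam * D| := by
    rw [abs_mul, abs_of_nonneg (by positivity : (0:ℝ) ≤ lam ^ (δ-1) * δ * (ybar + Φ₂ (x, lam * ybar)) ^ (δ - 1))]
  refine ⟨hderiv, habs, ?_⟩
  rw [habs]
  have hDb : |D| ≤ M2 := by
    have h1 : |D| = ‖D‖ := (Real.norm_eq_abs D).symm
    rw [h1]
    calc ‖D‖ ≤ ‖fderiv ℝ Φ₂ (x, lam * ybar)‖ * ‖((0:ℝ), (1:ℝ))‖ :=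
          (fderiv ℝ Φ₂ (x, lam * ybar)).le_opNorm _
      _ = ‖fderiv ℝ Φ₂ (x, lam * ybar)‖ := by simp [Prod.norm_def]
      _ ≤ M2 := hbD x _ hy01
  have hfac2 : |1 + lam * D| ≤ 1 + M2 := by
    calc |1 + lam * D| ≤ |1| + |lam * D| := abs_add_le _ _
      _ = 1 + lam * |D| := by rw [abs_one, abs_mul, abs_of_nonneg hlam0.le]
      _ ≤ 1 + 1 * M2 := by
          have := mul_le_mul hlam1.le hDb (abs_nonneg D) zero_le_one
          linarith
      _ = 1 + M2 := by ring
  have hfac1 : (ybar + Φ₂ (x, lam * ybar)) ^ (δ - 1) ≤ (1 + M1) ^ (δ - 1) := by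
    apply rpow_le_rpow hu0.le _ hδ1.le
    have := hbΦ x _ hy01
    linarith [hybar.2]
  have hlampow : lam ^ (δ - 1) ≤ ρ / C := by
    have h1 : lam ^ (δ - 1) ≤ ((ρ / C) ^ (1 / (δ - 1))) ^ (δ - 1) :=
      rpow_le_rpow hlam0.le (le_of_lt (lt_of_lt_of_le hlamS (min_le_right _ _))) hδ1.le
    rwa [← Real.rpow_mul hρC.le, one_div_mul_cancel hδ1.ne', rpow_one] at h1
  have key : lam ^ (δ - 1) * δ * (ybar + Φ₂ (x, lam * ybar)) ^ (δ - 1) * |1 + lam * D|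
      ≤ (ρ / C) * δ * ((1 + M1) ^ (δ - 1)) * (1 + M2) := by
    gcongr
  have hfin : (ρ / C) * δ * ((1 + M1) ^ (δ - 1)) * (1 + M2) = ρ := by
    rw [hC]; field_simp
  linarith
end
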